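/- arXiv:1902.06507 — 2 statements merged into one kernel-verified Lean document; each statement's English description precedes it below -/
import Mathlib

section
/- Let K be a field, E a finite set, and W ⊆ K^E a realization of a matroid M of rank r. Let W^⊥ ⊆ K^E be the dual configuration. Then there exist bases of W and of W^⊥ such that for every subset S ⊆ E with |S| = r one has c_{W,S} = c_{W^⊥,E∖S}. Consequently, in the Laurent polynomial ring K[x_e^{±1} : e ∈ E], ψ_{W^⊥}(x) = (Π_{e∈E} x_e) · ψ_W((x_e^{−1})_{e∈E}). -/
open scoped BigOperators

namespace Config
open Matrix (transpose)
open scoped Matrix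

variable {K : Type} [Field K] {E : Type} [Fintype E] [DecidableEq E]

/-- `w` is a (linear) basis of the configuration `W ⊆ K^E`. -/
def IsBasisOf {r : ℕ} (w : Fin r → E → K) (W : Submodule K (E → K)) : Prop :=
  LinearIndependent K w ∧ Submodule.span K (Set.range w) = W

/-- The coefficient `c_{W,B} = (det (w^i_e)_{1≤i≤r, e∈B})²`, the squared determinant of
the `r × r` submatrix of the coefficient matrix of `w` with column set `B` (the square
is independent of the chosen ordering of the columns). -/
noncomputable def cSq {r : ℕ} (w : Fin r → E → K) (B : Finset E) : K :=
  if h : B.card = r then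
    (Matrix.det (Matrix.of fun i j : Fin r =>
      w i ((Finset.equivFinOfCardEq h).symm j : E))) ^ 2
  else 0

/-- The configuration polynomial `ψ_W = ∑_B c_{W,B} · x^B` computed from the basis `w`
(the coefficient `c_{W,B}` vanishes unless `B` is a basis of the matroid `M_W`). -/
noncomputable def psi {r : ℕ} (w : Fin r → E → K) : MvPolynomial E K :=
  ∑ B ∈ Finset.univ.powersetCard r,
    MvPolynomial.C (cSq w B) * ∏ e ∈ B, MvPolynomial.X e

section Helpers

lemma sum_over_finset {S : Finset E} {m : ℕ} (h : S.card = m) (f : E → K) :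
    ∑ e ∈ S, f e = ∑ i : Fin m, f ((Finset.equivFinOfCardEq h).symm i : E) := by
  rw [← Finset.sum_coe_sort S f]
  exact ((Finset.equivFinOfCardEq h).symm.sum_comp (fun x : ↥S => f ↑x)).symm

lemma sumElim_bijective {S : Finset E} {a b : ℕ} (ha : S.card = a) (hb : Sᶜ.card = b) :
    Function.Bijective (Sum.elim
      (fun i : Fin a => ((Finset.equivFinOfCardEq ha).symm i : E))
      (fun j : Fin b => ((Finset.equivFinOfCardEq hb).symm j : E))) := by
  rw [Fintype.bijective_iff_surjective_and_card]
  constructor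
  · intro e
    by_cases h : e ∈ S
    · exact ⟨Sum.inl ((Finset.equivFinOfCardEq ha) ⟨e, h⟩), by simp⟩
    · exact ⟨Sum.inr ((Finset.equivFinOfCardEq hb) ⟨e, Finset.mem_compl.mpr h⟩), by simp⟩
  · rw [Fintype.card_sum, Fintype.card_fin, Fintype.card_fin, ← ha, ← hb,
      Finset.card_add_card_compl]

lemma sq_det_submatrix_perm {m : Type} [Fintype m] [DecidableEq m] {R : Type} [CommRing R]
    (M : Matrix m m R) (π : Equiv.Perm m) :
    ((M.submatrix id ⇑π).det) ^ 2 = (M.det) ^ 2 := by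
  rw [Matrix.det_permute' π M]
  rcases Int.units_eq_one_or (Equiv.Perm.sign π) with h | h <;> simp [h, mul_pow]

lemma exists_good_basis (W : Submodule K (E → K)) (r : ℕ) (hr : Module.finrank K W = r) :
    ∃ (S0 : Finset E) (hS0 : S0.card = r) (w : Fin r → E → K),
      IsBasisOf w W ∧ (∀ i, w i ∈ W) ∧
      (∀ i i', w i (((Finset.equivFinOfCardEq hS0).symm i' : E)) = if i' = i then 1 else 0) := by
  classical
  have hWfd : FiniteDimensional K W := FiniteDimensional.finiteDimensional_submodule W
  -- property: coordinates on S determine elements of W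
  set P : Finset E → Prop := fun S => ∀ u ∈ W, (∀ e ∈ S, u e = 0) → u = 0 with hP
  have hPuniv : P Finset.univ := by
    intro u _ h
    funext e; exact h e (Finset.mem_univ e)
  obtain ⟨S0, hS0mem, hS0min⟩ :=
    Finset.exists_min_image ((Finset.univ.powerset).filter P) Finset.card
      ⟨Finset.univ, by
        simp only [Finset.mem_filter, Finset.mem_powerset]
        exact ⟨Finset.subset_univ _, hPuniv⟩⟩
  have hPS0 : P S0 := (Finset.mem_filter.mp hS0mem).2
  -- the projection map
  set L : W →ₗ[K] (↥S0 → K) :=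
    LinearMap.pi (fun x : ↥S0 => (LinearMap.proj (x : E)).comp W.subtype) with hL
  have hLapp : ∀ (u : W) (x : ↥S0), L u x = (u : E → K) x := fun u x => rfl
  have hLinj : Function.Injective L := by
    rw [← LinearMap.ker_eq_bot, Submodule.eq_bot_iff]
    intro u hu
    have : (u : E → K) = 0 := by
      apply hPS0 u u.2
      intro e he
      have := congrFun hu ⟨e, he⟩
      simpa [hLapp] using this
    exact Subtype.ext this
  have hrle : r ≤ S0.card := by
    have := LinearMap.finrank_le_finrank_of_injective hLinj
    rwa [hr, Module.finrank_fintype_fun_eq_card, Fintype.card_coe] at this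
  have hler : S0.card ≤ r := by
    by_contra h
    push_neg at h
    -- the coordinate functionals indexed by S0 are dependent in Dual K W
    set f : ↥S0 → Module.Dual K W :=
      fun x => (LinearMap.proj (x : E)).comp W.subtype with hf
    have hnli : ¬ LinearIndependent K f := by
      intro hli
      have := hli.fintype_card_le_finrank
      rw [Subspace.dual_finrank_eq, hr, Fintype.card_coe] at this
      omega
    obtain ⟨g, hg0, x0, hx0⟩ := Fintype.not_linearIndependent_iff.mp hnli
    -- erase x0 still has property P
    have hPerase : P (S0.erase (x0 : E)) := by
      intro u hu hvanish
      apply hPS0 u hu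
      intro e he
      by_cases hex : e = (x0 : E)
      · subst hex
        have hrel : ∑ x : ↥S0, g x * u (x : E) = 0 := by
          have := congrArg (fun (φ : Module.Dual K W) => φ ⟨u, hu⟩) hg0
          simpa [f, LinearMap.sum_apply, LinearMap.smul_apply, smul_eq_mul] using this
        have hsingle : ∑ x : ↥S0, g x * u (x : E) = g x0 * u (x0 : E) := by
          apply Finset.sum_eq_single x0
          · intro b _ hb
            have hbe : (b : E) ∈ S0.erase (x0 : E) :=
              Finset.mem_erase.mpr ⟨fun hc => hb (Subtype.ext hc), b.2⟩
            rw [hvanish _ hbe, mul_zero]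
          · intro hx; exact absurd (Finset.mem_univ x0) hx
        have := hsingle ▸ hrel
        exact (mul_eq_zero.mp this).resolve_left hx0
      · exact hvanish e (Finset.mem_erase.mpr ⟨hex, he⟩)
    have hmem : S0.erase (x0 : E) ∈ (Finset.univ.powerset).filter P := by
      simp only [Finset.mem_filter, Finset.mem_powerset]
      exact ⟨Finset.subset_univ _, hPerase⟩
    have := hS0min _ hmem
    have hcard : (S0.erase (x0 : E)).card = S0.card - 1 :=
      Finset.card_erase_of_mem x0.2
    have hpos : 0 < S0.card := lt_of_lt_of_le (Nat.pos_of_ne_zero (by omega)) hrle |>.trans_le (le_refl _) |>.trans_le (le_refl _)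
    omega
  have hS0card : S0.card = r := le_antisymm hler hrle
  -- L is bijective
  have hLsurj : Function.Surjective L := by
    have h1 : Module.finrank K (LinearMap.range L) = Module.finrank K (↥S0 → K) := by
      rw [LinearMap.finrank_range_of_inj hLinj, hr,
        Module.finrank_fintype_fun_eq_card, Fintype.card_coe, hS0card]
    rw [← LinearMap.range_eq_top]
    exact Submodule.eq_top_of_finrank_eq h1
  set p : W ≃ₗ[K] (↥S0 → K) := LinearEquiv.ofBijective L ⟨hLinj, hLsurj⟩ with hp
  set sE : Fin r ≃ ↥S0 := (Finset.equivFinOfCardEq hS0card).symm with hsE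
  set p' : W ≃ₗ[K] (Fin r → K) :=
    p.trans (LinearEquiv.funCongrLeft K K sE) with hp'
  have hp'app : ∀ (u : W) (i : Fin r), p' u i = (u : E → K) (sE i) := fun u i => rfl
  set w : Fin r → E → K := fun i => ((p'.symm (Pi.single i 1) : W) : E → K) with hw
  have hwmem : ∀ i, w i ∈ W := fun i => (p'.symm (Pi.single i 1)).2
  have hdelta : ∀ i i', w i ((sE i' : E)) = if i' = i then 1 else 0 := by
    intro i i'
    have : w i (sE i') = p' (p'.symm (Pi.single i 1)) i' := rfl
    rw [this, p'.apply_symm_apply]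
    simp [Pi.single_apply]
  refine ⟨S0, hS0card, w, ⟨?_, ?_⟩, hwmem, hdelta⟩
  · -- linear independence
    have hfun : (fun i : Fin r => p'.symm (Pi.single i 1)) =
        ⇑p'.symm.toLinearMap ∘ ⇑(Pi.basisFun K (Fin r)) := by
      funext i; simp [Pi.basisFun_apply]
    have hb : LinearIndependent K (fun i : Fin r => p'.symm (Pi.single i 1)) := by
      rw [hfun]
      exact (Pi.basisFun K (Fin r)).linearIndependent.map' p'.symm.toLinearMap p'.symm.ker
    have := hb.map' W.subtype (Submodule.ker_subtype W)
    exact this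
  · -- span
    have : Set.range w = W.subtype '' (Set.range fun i : Fin r => p'.symm (Pi.single i 1)) := by
      rw [← Set.range_comp]; rfl
    rw [this, Submodule.span_image]
    have hfun : (fun i : Fin r => p'.symm (Pi.single i 1)) =
        ⇑p'.symm.toLinearMap ∘ ⇑(Pi.basisFun K (Fin r)) := by
      funext i; simp [Pi.basisFun_apply]
    have hspan : Submodule.span K (Set.range fun i : Fin r => p'.symm (Pi.single i 1)) = ⊤ := by
      rw [hfun]
      have := ((Pi.basisFun K (Fin r)).map p'.symm).span_eq
      simpa only [Module.Basis.coe_map, LinearEquiv.coe_coe] using this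
    rw [hspan, Submodule.map_subtype_top]

end Helpers

/-- **Theorem (Dual configuration polynomials).**
Let `W ⊆ K^E` realize a matroid of rank `r` and let `W^⊥` be the dual configuration
(the orthogonal complement of `W` for the standard bilinear form).  Then there are
bases of `W` and of `W^⊥` such that `c_{W,S} = c_{W^⊥,E∖S}` for every `S ⊆ E` with
`|S| = r`; consequently, in the field of fractions of `K[x_e : e ∈ E]`,
`ψ_{W^⊥}(x) = (∏ₑ x_e) · ψ_W((x_e⁻¹)ₑ)`. -/
theorem dual_configuration_polynomial
    (W Wperp : Submodule K (E → K)) (r : ℕ) (hr : Module.finrank K W = r)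
    (hperp : ∀ v : E → K, v ∈ Wperp ↔ ∀ u ∈ W, ∑ e : E, u e * v e = 0) :
    ∃ (w : Fin r → E → K) (w' : Fin (Fintype.card E - r) → E → K),
      IsBasisOf w W ∧ IsBasisOf w' Wperp ∧
      (∀ S : Finset E, S.card = r → cSq w S = cSq w' Sᶜ) ∧
      algebraMap (MvPolynomial E K) (FractionRing (MvPolynomial E K)) (psi w') =
        (∏ e : E,
          algebraMap (MvPolynomial E K) (FractionRing (MvPolynomial E K))
            (MvPolynomial.X e)) *
        MvPolynomial.eval₂
          ((algebraMap (MvPolynomial E K) (FractionRing (MvPolynomial E K))).comp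
            MvPolynomial.C)
          (fun e =>
            (algebraMap (MvPolynomial E K) (FractionRing (MvPolynomial E K))
              (MvPolynomial.X e))⁻¹)
          (psi w) := by
  classical
  obtain ⟨S0, hS0, w, hwbasis, hwmem, hdelta0⟩ := exists_good_basis W r hr
  have hrn : r ≤ Fintype.card E := hS0 ▸ Finset.card_le_univ S0
  have hS0c : S0ᶜ.card = Fintype.card E - r := by rw [Finset.card_compl, hS0]
  set s : Fin r → E := fun i => ((Finset.equivFinOfCardEq hS0).symm i : E) with hs
  set t : Fin (Fintype.card E - r) → E :=
    fun j => ((Finset.equivFinOfCardEq hS0c).symm j : E) with ht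
  have hdelta : ∀ i i', w i (s i') = if i' = i then 1 else 0 := hdelta0
  have hsmem : ∀ i, s i ∈ S0 := fun i => ((Finset.equivFinOfCardEq hS0).symm i).2
  have htmem : ∀ j, t j ∉ S0 := fun j =>
    Finset.mem_compl.mp ((Finset.equivFinOfCardEq hS0c).symm j).2
  have hsinj : Function.Injective s := fun a b h =>
    (Finset.equivFinOfCardEq hS0).symm.injective (Subtype.ext h)
  have htinj : Function.Injective t := fun a b h =>
    (Finset.equivFinOfCardEq hS0c).symm.injective (Subtype.ext h)
  have hs_surj : ∀ e ∈ S0, ∃ i, s i = e := fun e he =>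
    ⟨(Finset.equivFinOfCardEq hS0) ⟨e, he⟩, by simp [hs]⟩
  have ht_surj : ∀ e, e ∉ S0 → ∃ j, t j = e := fun e he =>
    ⟨(Finset.equivFinOfCardEq hS0c) ⟨e, Finset.mem_compl.mpr he⟩, by simp [ht]⟩
  -- the dual basis
  set w' : Fin (Fintype.card E - r) → E → K := fun j e =>
    if h : e ∈ S0 then -(w ((Finset.equivFinOfCardEq hS0) ⟨e, h⟩) (t j))
    else (if e = t j then 1 else 0) with hw'
  have hP1 : ∀ j j', w' j (t j') = if j' = j then 1 else 0 := by
    intro j j'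
    rw [hw']
    simp only
    rw [dif_neg (htmem j')]
    by_cases h : j' = j
    · simp [h]
    · rw [if_neg, if_neg h]
      exact fun hc => h (htinj hc)
  have hP2 : ∀ j i, w' j (s i) = -(w i (t j)) := by
    intro j i
    rw [hw']
    simp only
    rw [dif_pos (hsmem i)]
    congr 2
    have : (⟨s i, hsmem i⟩ : ↥S0) = (Finset.equivFinOfCardEq hS0).symm i := rfl
    rw [this, Equiv.apply_symm_apply]
  -- orthogonality of basis vectors
  have hsum0 : ∀ i j, ∑ e : E, w i e * w' j e = 0 := by
    intro i j
    rw [← Finset.sum_add_sum_compl S0]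
    have h1 : ∑ e ∈ S0, w i e * w' j e = -(w i (t j)) := by
      rw [sum_over_finset hS0]
      have : ∀ i' : Fin r,
          w i ((Finset.equivFinOfCardEq hS0).symm i' : E) *
            w' j ((Finset.equivFinOfCardEq hS0).symm i' : E) =
          if i' = i then -(w i' (t j)) else 0 := by
        intro i'
        have e1 : w i (s i') = if i' = i then 1 else 0 := hdelta i i'
        have e2 : w' j (s i') = -(w i' (t j)) := hP2 j i'
        show w i (s i') * w' j (s i') = _
        rw [e1, e2]
        by_cases h : i' = i <;> simp [h]
      rw [Finset.sum_congr rfl (fun i' _ => this i')]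
      rw [Finset.sum_ite_eq' Finset.univ i (fun i' => -(w i' (t j)))]
      simp
    have h2 : ∑ e ∈ S0ᶜ, w i e * w' j e = w i (t j) := by
      rw [sum_over_finset hS0c]
      have : ∀ j' : Fin (Fintype.card E - r),
          w i ((Finset.equivFinOfCardEq hS0c).symm j' : E) *
            w' j ((Finset.equivFinOfCardEq hS0c).symm j' : E) =
          if j' = j then w i (t j') else 0 := by
        intro j'
        show w i (t j') * w' j (t j') = _
        rw [hP1]
        by_cases h : j' = j <;> simp [h]
      rw [Finset.sum_congr rfl (fun j' _ => this j')]
      rw [Finset.sum_ite_eq' Finset.univ j (fun j' => w i (t j'))]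
      simp
    rw [h1, h2, neg_add_cancel]
  -- orthogonality for all of W
  have horth : ∀ u ∈ W, ∀ j, ∑ e : E, u e * w' j e = 0 := by
    intro u hu j
    set ℓ : (E → K) →ₗ[K] K := ∑ e : E, (w' j e) • (LinearMap.proj e) with hℓ
    have hℓapp : ∀ v : E → K, ℓ v = ∑ e : E, v e * w' j e := by
      intro v
      rw [hℓ]
      simp [LinearMap.sum_apply, LinearMap.smul_apply, smul_eq_mul, mul_comm]
    have hker : W ≤ LinearMap.ker ℓ := by
      rw [← hwbasis.2]
      rw [Submodule.span_le]
      rintro _ ⟨i, rfl⟩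
      simp only [SetLike.mem_coe, LinearMap.mem_ker]
      rw [hℓapp]
      exact hsum0 i j
    have := hker hu
    rw [LinearMap.mem_ker, hℓapp] at this
    exact this
  have hw'mem : ∀ j, w' j ∈ Wperp := fun j => (hperp _).mpr (fun u hu => horth u hu j)
  -- every element of Wperp is a combination of the w' j
  have hrepr : ∀ v ∈ Wperp, v = ∑ j, v (t j) • w' j := by
    intro v hv
    set v' : E → K := v - ∑ j, v (t j) • w' j with hv'def
    have hv'perp : v' ∈ Wperp :=
      Submodule.sub_mem _ hv
        (Submodule.sum_mem _ fun j _ => Submodule.smul_mem _ _ (hw'mem j))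
    have hv't : ∀ j', v' (t j') = 0 := by
      intro j'
      rw [hv'def]
      simp only [Pi.sub_apply, Finset.sum_apply, Pi.smul_apply, smul_eq_mul]
      have : ∀ j, v (t j) * w' j (t j') = if j = j' then v (t j) else 0 := by
        intro j
        rw [hP1]
        by_cases h : j' = j
        · simp [h]
        · rw [if_neg h, if_neg (fun hc => h hc.symm), mul_zero]
      rw [Finset.sum_congr rfl (fun j _ => this j)]
      rw [Finset.sum_ite_eq' Finset.univ j' (fun j => v (t j))]
      simp
    have hv's : ∀ i, v' (s i) = 0 := by
      intro i
      have h0 : ∑ e : E, w i e * v' e = 0 := (hperp v').mp hv'perp (w i) (hwmem i)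
      rw [← Finset.sum_add_sum_compl S0] at h0
      have h1 : ∑ e ∈ S0, w i e * v' e = v' (s i) := by
        rw [sum_over_finset hS0]
        have : ∀ i' : Fin r,
            w i ((Finset.equivFinOfCardEq hS0).symm i' : E) *
              v' ((Finset.equivFinOfCardEq hS0).symm i' : E) =
            if i' = i then v' (s i') else 0 := by
          intro i'
          show w i (s i') * v' (s i') = _
          rw [hdelta]
          by_cases h : i' = i <;> simp [h]
        rw [Finset.sum_congr rfl (fun i' _ => this i')]
        rw [Finset.sum_ite_eq' Finset.univ i (fun i' => v' (s i'))]
        simp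
      have h2 : ∑ e ∈ S0ᶜ, w i e * v' e = 0 := by
        rw [sum_over_finset hS0c]
        apply Finset.sum_eq_zero
        intro j' _
        show w i (t j') * v' (t j') = 0
        rw [hv't, mul_zero]
      rw [h1, h2, add_zero] at h0
      exact h0
    have : v' = 0 := by
      funext e
      by_cases h : e ∈ S0
      · obtain ⟨i, rfl⟩ := hs_surj e h
        exact hv's i
      · obtain ⟨j, rfl⟩ := ht_surj e h
        exact hv't j
    have := sub_eq_zero.mp (hv'def ▸ this)
    exact this
  have hw'basis : IsBasisOf w' Wperp := by
    constructor
    · rw [Fintype.linearIndependent_iff]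
      intro g hg j0
      have := congrFun hg (t j0)
      simp only [Finset.sum_apply, Pi.smul_apply, smul_eq_mul, Pi.zero_apply] at this
      have heach : ∀ j, g j * w' j (t j0) = if j = j0 then g j else 0 := by
        intro j
        rw [hP1]
        by_cases h : j0 = j
        · simp [h]
        · rw [if_neg h, if_neg (fun hc => h hc.symm), mul_zero]
      rw [Finset.sum_congr rfl (fun j _ => heach j),
        Finset.sum_ite_eq' Finset.univ j0 (fun j => g j)] at this
      simpa using this
    · apply le_antisymm
      · rw [Submodule.span_le]
        rintro _ ⟨j, rfl⟩
        exact hw'mem j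
      · intro v hv
        rw [hrepr v hv]
        exact Submodule.sum_mem _ fun j _ =>
          Submodule.smul_mem _ _ (Submodule.subset_span (Set.mem_range_self j))
  -- the coefficient identity
  have hcsq : ∀ S : Finset E, S.card = r → cSq w S = cSq w' Sᶜ := by
    intro S hS
    have hSc : Sᶜ.card = Fintype.card E - r := by rw [Finset.card_compl, hS]
    set σ : Fin r → E := fun i => ((Finset.equivFinOfCardEq hS).symm i : E) with hσ
    set τ : Fin (Fintype.card E - r) → E :=
      fun j => ((Finset.equivFinOfCardEq hSc).symm j : E) with hτ
    have hσmem : ∀ i, σ i ∈ S := fun i => ((Finset.equivFinOfCardEq hS).symm i).2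
    have hτmem : ∀ j, τ j ∉ S := fun j =>
      Finset.mem_compl.mp ((Finset.equivFinOfCardEq hSc).symm j).2
    have hτinj : Function.Injective τ := fun a b h =>
      (Finset.equivFinOfCardEq hSc).symm.injective (Subtype.ext h)
    set ρ : (Fin r ⊕ Fin (Fintype.card E - r)) ≃ E :=
      Equiv.ofBijective _ (sumElim_bijective hS hSc) with hρ
    set ρ0 : (Fin r ⊕ Fin (Fintype.card E - r)) ≃ E :=
      Equiv.ofBijective _ (sumElim_bijective hS0 hS0c) with hρ0
    have hρl : ∀ i, ρ (Sum.inl i) = σ i := fun i => rfl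
    have hρr : ∀ j, ρ (Sum.inr j) = τ j := fun j => rfl
    have hρ0l : ∀ i, ρ0 (Sum.inl i) = s i := fun i => rfl
    have hρ0r : ∀ j, ρ0 (Sum.inr j) = t j := fun j => rfl
    set Cm : Matrix (Fin r ⊕ Fin (Fintype.card E - r)) E K :=
      fun x e => Sum.elim (fun i => w i e) (fun j => if e = τ j then 1 else 0) x with hCm
    set Km : Matrix (Fin r ⊕ Fin (Fintype.card E - r)) E K :=
      fun x e => Sum.elim (fun i => if e = s i then 1 else 0) (fun j => w' j e) x with hKm
    set A : Matrix (Fin r) (Fin r) K := Matrix.of fun i i' => w i (σ i') with hA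
    set Bm : Matrix (Fin (Fintype.card E - r)) (Fin (Fintype.card E - r)) K :=
      Matrix.of fun j j' => w' j (τ j') with hBm
    -- C in ρ-coordinates
    have hCρ : Cm.submatrix id ⇑ρ =
        Matrix.fromBlocks A (Matrix.of fun i j => w i (τ j)) 0 1 := by
      ext x y
      cases x with
      | inl i =>
        cases y with
        | inl i' => rfl
        | inr j => rfl
      | inr j =>
        cases y with
        | inl i' =>
          show (if σ i' = τ j then 1 else 0 : K) = 0
          rw [if_neg]
          intro hc
          exact hτmem j (hc ▸ hσmem i')
        | inr j' =>
          show (if τ j' = τ j then 1 else 0 : K) = (1 : Matrix _ _ K) j j'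
          rw [Matrix.one_apply]
          by_cases h : j = j'
          · simp [h]
          · rw [if_neg (fun hc => h (hτinj hc).symm), if_neg h]
    have hdetCρ : (Cm.submatrix id ⇑ρ).det = A.det := by
      rw [hCρ, Matrix.det_fromBlocks_zero₂₁, Matrix.det_one, mul_one]
    -- K in ρ0-coordinates
    have hKρ0 : Km.submatrix id ⇑ρ0 =
        Matrix.fromBlocks 1 0 (Matrix.of fun j i' => -(w i' (t j))) 1 := by
      ext x y
      cases x with
      | inl i =>
        cases y with
        | inl i' =>
          show (if s i' = s i then 1 else 0 : K) = (1 : Matrix _ _ K) i i'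
          rw [Matrix.one_apply]
          by_cases h : i = i'
          · simp [h]
          · rw [if_neg (fun hc => h (hsinj hc).symm), if_neg h]
        | inr j =>
          show (if t j = s i then 1 else 0 : K) = 0
          rw [if_neg]
          intro hc
          exact htmem j (hc ▸ hsmem i)
      | inr j =>
        cases y with
        | inl i' => exact hP2 j i'
        | inr j' =>
          show w' j (t j') = (1 : Matrix _ _ K) j j'
          rw [hP1, Matrix.one_apply]
          by_cases h : j = j'
          · simp [h]
          · rw [if_neg (fun hc => h hc.symm), if_neg h]
    have hdetKρ0 : (Km.submatrix id ⇑ρ0).det = 1 := by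
      rw [hKρ0, Matrix.det_fromBlocks_zero₁₂, Matrix.det_one, Matrix.det_one, one_mul]
    -- the product identity
    have hprod : (Cm.submatrix id ⇑ρ0) * (Km.submatrix id ⇑ρ0)ᵀ =
        Matrix.fromBlocks 1 0
          (Matrix.of fun j i' => if τ j = s i' then 1 else 0) Bmᵀ := by
      ext x y
      have key : ((Cm.submatrix id ⇑ρ0) * (Km.submatrix id ⇑ρ0)ᵀ) x y =
          ∑ e : E, Cm x e * Km y e := by
        rw [Matrix.mul_apply]
        simp only [Matrix.transpose_apply, Matrix.submatrix_apply, id]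
        exact ρ0.sum_comp (fun e => Cm x e * Km y e)
      rw [key]
      cases x with
      | inl i =>
        cases y with
        | inl i' =>
          show (∑ e : E, w i e * (if e = s i' then 1 else 0)) = (1 : Matrix _ _ K) i i'
          have : ∀ e : E, w i e * (if e = s i' then 1 else 0) =
              if e = s i' then w i e else 0 := by
            intro e; by_cases h : e = s i' <;> simp [h]
          rw [Finset.sum_congr rfl (fun e _ => this e),
            Finset.sum_ite_eq' Finset.univ (s i') (fun e => w i e)]
          simp only [Finset.mem_univ, if_true]
          rw [hdelta, Matrix.one_apply]
          by_cases h : i = i'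
          · simp [h]
          · rw [if_neg (fun hc => h hc.symm), if_neg h]
        | inr j =>
          show (∑ e : E, w i e * w' j e) = 0
          exact hsum0 i j
      | inr j =>
        cases y with
        | inl i' =>
          show (∑ e : E, (if e = τ j then 1 else 0) * (if e = s i' then 1 else 0)) = _
          have : ∀ e : E, (if e = τ j then (1:K) else 0) * (if e = s i' then 1 else 0) =
              if e = τ j then (if e = s i' then 1 else 0) else 0 := by
            intro e; by_cases h : e = τ j <;> simp [h]
          rw [Finset.sum_congr rfl (fun e _ => this e),
            Finset.sum_ite_eq' Finset.univ (τ j) (fun e => if e = s i' then (1:K) else 0)]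
          simp only [Finset.mem_univ, if_true]
          rfl
        | inr j' =>
          show (∑ e : E, (if e = τ j then 1 else 0) * w' j' e) = Bmᵀ j j'
          have : ∀ e : E, (if e = τ j then (1:K) else 0) * w' j' e =
              if e = τ j then w' j' e else 0 := by
            intro e; by_cases h : e = τ j <;> simp [h]
          rw [Finset.sum_congr rfl (fun e _ => this e),
            Finset.sum_ite_eq' Finset.univ (τ j) (fun e => w' j' e)]
          simp only [Finset.mem_univ, if_true]
          rfl
    have hdetBm : (Cm.submatrix id ⇑ρ0).det = Bm.det := by
      have h1 := congrArg Matrix.det hprod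
      rw [Matrix.det_mul, Matrix.det_transpose, hdetKρ0, mul_one,
        Matrix.det_fromBlocks_zero₁₂, Matrix.det_one, one_mul,
        Matrix.det_transpose] at h1
      exact h1
    -- relate the two column orderings of C
    have hC0 : Cm.submatrix id ⇑ρ0 = (Cm.submatrix id ⇑ρ).submatrix id ⇑(ρ0.trans ρ.symm) := by
      ext x y
      simp [Matrix.submatrix_apply]
    have hsq : (A.det) ^ 2 = (Bm.det) ^ 2 := by
      calc (A.det) ^ 2 = ((Cm.submatrix id ⇑ρ).det) ^ 2 := by rw [hdetCρ]
        _ = ((Cm.submatrix id ⇑ρ0).det) ^ 2 := by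
            rw [hC0, sq_det_submatrix_perm]
        _ = (Bm.det) ^ 2 := by rw [hdetBm]
    show cSq w S = cSq w' Sᶜ
    rw [cSq, cSq, dif_pos hS, dif_pos hSc]
    exact hsq
  -- the polynomial identity
  set φ := algebraMap (MvPolynomial E K) (FractionRing (MvPolynomial E K)) with hφ
  have hφX : ∀ e : E, φ (MvPolynomial.X e) ≠ 0 := by
    intro e hc
    rw [hφ, IsFractionRing.to_map_eq_zero_iff] at hc
    exact MvPolynomial.X_ne_zero e hc
  have hpsi' : psi w' = ∑ S ∈ Finset.univ.powersetCard r,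
      MvPolynomial.C (cSq w S) * ∏ e ∈ Sᶜ, MvPolynomial.X e := by
    rw [psi]
    refine Finset.sum_bij' (fun B _ => Bᶜ) (fun S _ => Sᶜ) ?_ ?_ ?_ ?_ ?_
    · intro B hB
      rw [Finset.mem_powersetCard_univ] at hB ⊢
      rw [Finset.card_compl, hB, Nat.sub_sub_self hrn]
    · intro S hS
      rw [Finset.mem_powersetCard_univ] at hS ⊢
      rw [Finset.card_compl, hS]
    · intro B _; exact compl_compl B
    · intro S _; exact compl_compl S
    · intro B hB
      rw [Finset.mem_powersetCard_univ] at hB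
      have hBc : Bᶜ.card = r := by rw [Finset.card_compl, hB, Nat.sub_sub_self hrn]
      rw [hcsq Bᶜ hBc, compl_compl]
  have hLHS : φ (psi w') = ∑ S ∈ Finset.univ.powersetCard r,
      φ (MvPolynomial.C (cSq w S)) * ∏ e ∈ Sᶜ, φ (MvPolynomial.X e) := by
    rw [hpsi', map_sum]
    refine Finset.sum_congr rfl fun S _ => ?_
    rw [map_mul, map_prod]
  have hRHS : MvPolynomial.eval₂ (φ.comp MvPolynomial.C)
      (fun e => (φ (MvPolynomial.X e))⁻¹) (psi w) =
      ∑ S ∈ Finset.univ.powersetCard r,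
        φ (MvPolynomial.C (cSq w S)) * ∏ e ∈ S, (φ (MvPolynomial.X e))⁻¹ := by
    rw [psi, ← MvPolynomial.coe_eval₂Hom, map_sum]
    refine Finset.sum_congr rfl fun S _ => ?_
    rw [map_mul, map_prod]
    congr 1
    · rw [MvPolynomial.eval₂Hom_C, RingHom.comp_apply]
    · exact Finset.prod_congr rfl fun e _ => MvPolynomial.eval₂Hom_X' _ _ e
  refine ⟨w, w', hwbasis, hw'basis, hcsq, ?_⟩
  rw [hLHS, hRHS, Finset.mul_sum]
  refine Finset.sum_congr rfl fun S hS => ?_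
  rw [Finset.mem_powersetCard_univ] at hS
  have hone : (∏ e ∈ S, φ (MvPolynomial.X e)) * ∏ e ∈ S, (φ (MvPolynomial.X e))⁻¹ = 1 := by
    rw [← Finset.prod_mul_distrib]
    exact Finset.prod_eq_one fun e _ => mul_inv_cancel₀ (hφX e)
  calc φ (MvPolynomial.C (cSq w S)) * ∏ e ∈ Sᶜ, φ (MvPolynomial.X e)
      = φ (MvPolynomial.C (cSq w S)) *
        (((∏ e ∈ S, φ (MvPolynomial.X e)) * ∏ e ∈ S, (φ (MvPolynomial.X e))⁻¹) *
          ∏ e ∈ Sᶜ, φ (MvPolynomial.X e)) := by rw [hone, one_mul]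
    _ = (∏ e : E, φ (MvPolynomial.X e)) *
        (φ (MvPolynomial.C (cSq w S)) * ∏ e ∈ S, (φ (MvPolynomial.X e))⁻¹) := by
          rw [← Finset.prod_mul_prod_compl S (fun e => φ (MvPolynomial.X e))]
          ring

end Config
end

section
/- Let K be a field, W ⊆ K^E a realization of a matroid M, and e ∈ E. Then, up to nonzero square constant factors (i.e., for suitable compatible choices of bases of W, W∖e and W/e), the configuration polynomial satisfies: ψ_W = ψ_{W∖e} = ψ_{W/e} if e is a loop of M; ψ_W = x_e · ψ_{W∖e} = x_e · ψ_{W/e} if e is a coloop of M; and ψ_W = ψ_{W∖e} + x_e · ψ_{W/e} if e is neither a loop nor a coloop. In particular, in the last case ∂ψ_W/∂x_e = ψ_{W/e} and ψ_W|_{x_e=0} = ψ_{W∖e}. -/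
open scoped BigOperators

namespace Config

variable {K : Type} [Field K] {E : Type} [Fintype E] [DecidableEq E]

/-- The coordinate functional `e^∨` of `K^E` restricted to a subspace `W ⊆ K^E`. -/
noncomputable def coordFun (W : Submodule K (E → K)) (e : E) : W →ₗ[K] K :=
  (LinearMap.proj e).comp W.subtype

/-- `S ⊆ E` is independent in the matroid `M_W` realized by the configuration `W`:
the restricted coordinate functionals `(e^∨|_W)_{e ∈ S}` are linearly independent. -/
def Indep (W : Submodule K (E → K)) (S : Finset E) : Prop :=
  LinearIndependent K (fun e : S => coordFun W e)

/-- The restriction configuration `W|_F ⊆ K^F`: the image of `W` under the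
coordinate projection `K^E ↠ K^F`. -/
noncomputable def restrictConfig (W : Submodule K (E → K)) (F : Finset E) :
    Submodule K ({x : E // x ∈ F} → K) :=
  W.map (LinearMap.funLeft K K (fun x : {x : E // x ∈ F} => (x : E)))

/-- The deletion configuration `W ∖ F = W|_{E ∖ F} ⊆ K^{E ∖ F}`. -/
noncomputable def deleteConfig (W : Submodule K (E → K)) (F : Finset E) :
    Submodule K ({x : E // x ∉ F} → K) :=
  W.map (LinearMap.funLeft K K (fun x : {x : E // x ∉ F} => (x : E)))

/-- The contraction configuration `W/F = W ∩ K^{E ∖ F} ⊆ K^{E ∖ F}`: the vectors of `W`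
vanishing on `F`, viewed in the coordinates `E ∖ F`. -/
noncomputable def contractConfig (W : Submodule K (E → K)) (F : Finset E) :
    Submodule K ({x : E // x ∉ F} → K) :=
  (W ⊓ LinearMap.ker (LinearMap.funLeft K K (fun x : {x : E // x ∈ F} => (x : E)))).map
    (LinearMap.funLeft K K (fun x : {x : E // x ∉ F} => (x : E)))

/-- `B` is a basis (a maximal independent set) of the matroid `M_W`. -/
def IsBase (W : Submodule K (E → K)) (B : Finset E) : Prop :=
  Indep W B ∧ ∀ S : Finset E, Indep W S → S.card ≤ B.card


open MvPolynomial

/-- Squared determinant is invariant under arbitrary row/column reindexings. -/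
lemma detSq_submatrix {I J : Type} [Fintype I] [DecidableEq I] [Fintype J] [DecidableEq J]
    (M : Matrix J J K) (ρ φ : I ≃ J) :
    (M.submatrix ρ φ).det ^ 2 = M.det ^ 2 := by
  have h1 : M.submatrix ⇑ρ ⇑φ = (M.submatrix ⇑ρ ⇑ρ).submatrix id ⇑(φ.trans ρ.symm) := by
    ext i j; simp
  rw [h1, Matrix.det_permute', Matrix.det_submatrix_equiv_self, mul_pow]
  have h2 : ((Equiv.Perm.sign (φ.trans ρ.symm) : ℤ) : K) ^ 2 = 1 := by
    rcases Int.units_eq_one_or (Equiv.Perm.sign (φ.trans ρ.symm)) with h | h <;>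
      rw [h] <;> norm_num
  rw [h2, one_mul]

omit [Fintype E] [DecidableEq E] in
lemma cSq_of_card {r : ℕ} (w : Fin r → E → K) {B : Finset E} (h : B.card = r) :
    cSq w B = (Matrix.det (Matrix.of fun i j : Fin r =>
      w i ((Finset.equivFinOfCardEq h).symm j : E))) ^ 2 := by
  rw [cSq, dif_pos h]

/-- `cSq` can be computed from any reindexing of rows and columns. -/
lemma cSq_eq_of_equiv {r : ℕ} (w : Fin r → E → K) {B : Finset E} (h : B.card = r)
    {I : Type} [Fintype I] [DecidableEq I] (ρ : I ≃ Fin r) (σ : I ≃ {x // x ∈ B}) :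
    cSq w B = (Matrix.det (Matrix.of fun i j : I => w (ρ i) ((σ j : B) : E))) ^ 2 := by
  rw [cSq_of_card w h]
  have h1 : (Matrix.of fun i j : I => w (ρ i) ((σ j : B) : E)) =
      (Matrix.of fun i j : Fin r =>
        w i ((Finset.equivFinOfCardEq h).symm j : E)).submatrix
        ⇑ρ ⇑(σ.trans (Finset.equivFinOfCardEq h)) := by
    ext i j; simp
  rw [h1, detSq_submatrix]

omit [Fintype E] [DecidableEq E] in
lemma cSq_eq_zero_of_col {r : ℕ} (w : Fin r → E → K) {B : Finset E} {e : E} (he : e ∈ B)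
    (h0 : ∀ i, w i e = 0) : cSq w B = 0 := by
  rw [cSq]
  split
  · next h =>
    have hz := Matrix.det_eq_zero_of_column_eq_zero
      (A := Matrix.of fun i j : Fin r => w i ((Finset.equivFinOfCardEq h).symm j : E))
      (Finset.equivFinOfCardEq h ⟨e, he⟩) (fun i => by simp [h0])
    rw [hz]; ring
  · rfl

omit [Fintype E] [DecidableEq E] in
lemma cSq_smul {r : ℕ} (u u' : Fin r → E → K) (A : Matrix (Fin r) (Fin r) K)
    (hA : ∀ i f, u' i f = ∑ j, A i j * u j f) (B : Finset E) :
    cSq u' B = A.det ^ 2 * cSq u B := by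
  rw [cSq, cSq]
  split
  · next h =>
    have h1 : (Matrix.of fun i j : Fin r => u' i ((Finset.equivFinOfCardEq h).symm j : E)) =
        A * (Matrix.of fun i j : Fin r => u i ((Finset.equivFinOfCardEq h).symm j : E)) := by
      ext i j; simp [Matrix.mul_apply, hA]
    rw [h1, Matrix.det_mul, mul_pow]
  · rw [mul_zero]

lemma psi_smul {r : ℕ} (u u' : Fin r → E → K) (A : Matrix (Fin r) (Fin r) K)
    (hA : ∀ i f, u' i f = ∑ j, A i j * u j f) :
    psi u' = MvPolynomial.C (A.det ^ 2) * psi u := by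
  rw [psi, psi, Finset.mul_sum]
  refine Finset.sum_congr rfl fun B _ => ?_
  rw [cSq_smul u u' A hA, map_mul, mul_assoc]

/-- A `Basis` of the submodule from an `IsBasisOf` family. -/
noncomputable def basisOf {r : ℕ} {V : Submodule K (E → K)} (u : Fin r → E → K)
    (hu : IsBasisOf u V) : Module.Basis (Fin r) K V :=
  (Module.Basis.span hu.1).map (LinearEquiv.ofEq _ _ (by rw [hu.2]))

lemma basisOf_coe {r : ℕ} {V : Submodule K (E → K)} (u : Fin r → E → K)
    (hu : IsBasisOf u V) (i : Fin r) : ((basisOf u hu i : V) : E → K) = u i := by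
  simp only [basisOf, Module.Basis.map_apply]
  rw [LinearEquiv.coe_ofEq_apply, Module.Basis.span_apply hu.1 i]

omit [Fintype E] [DecidableEq E] in
lemma mem_of_isBasisOf {r : ℕ} {V : Submodule K (E → K)} {u : Fin r → E → K}
    (hu : IsBasisOf u V) (i : Fin r) : u i ∈ V := by
  rw [← hu.2]; exact Submodule.subset_span ⟨i, rfl⟩

/-- Two bases of the same configuration give the same `psi` up to a nonzero square factor. -/
lemma psi_eq_of_isBasisOf {r r' : ℕ} {V : Submodule K (E → K)}
    {u : Fin r → E → K} {u' : Fin r' → E → K}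
    (hu : IsBasisOf u V) (hu' : IsBasisOf u' V) :
    ∃ a : K, a ≠ 0 ∧ psi u' = MvPolynomial.C (a ^ 2) * psi u := by
  have hrr : r' = r := by
    have := Module.Basis.indexEquiv (basisOf u hu) (basisOf u' hu')
    simpa using (Fintype.card_congr this).symm
  subst hrr
  set b := basisOf u hu with hb
  set b' := basisOf u' hu' with hb'
  set A : Matrix (Fin r') (Fin r') K := Matrix.of fun i j => b.repr (b' i) j with hA
  have hAdet : A.det ≠ 0 := by
    haveI := b.invertibleToMatrix b'
    have h3 : IsUnit (b.toMatrix ⇑b').det :=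
      (Matrix.isUnit_iff_isUnit_det _).mp (isUnit_of_invertible _)
    have h4 : A = (b.toMatrix ⇑b').transpose := by
      funext i j
      simp [hA, Module.Basis.toMatrix_apply, Matrix.transpose_apply]
    rw [h4, Matrix.det_transpose]
    exact h3.ne_zero
  refine ⟨A.det, hAdet, psi_smul u u' A (fun i f => ?_)⟩
  have h1 : (b' i : E → K) = u' i := basisOf_coe u' hu' i
  have h2 : ∑ j, b.repr (b' i) j • (b j : E → K) = ((b' i : V) : E → K) := by
    exact_mod_cast congrArg Subtype.val (b.sum_repr (b' i))
  calc u' i f = ((b' i : V) : E → K) f := by rw [h1]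
    _ = (∑ j, b.repr (b' i) j • (b j : E → K)) f := by rw [h2]
    _ = ∑ j, A i j * u j f := by
        rw [Finset.sum_apply]
        refine Finset.sum_congr rfl fun j _ => ?_
        rw [basisOf_coe u hu j, Pi.smul_apply, smul_eq_mul]
        rfl

/-- Independence of a set is equivalent to linear independence of the corresponding
columns of the coefficient matrix of a basis. -/
lemma indep_iff_cols {r : ℕ} {V : Submodule K (E → K)} {u : Fin r → E → K}
    (hu : IsBasisOf u V) (S : Finset E) :
    Indep V S ↔ LinearIndependent K (fun f : S => fun i : Fin r => u i (f : E)) := by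
  set b := basisOf u hu with hb
  set Φ : (V →ₗ[K] K) →ₗ[K] (Fin r → K) :=
    LinearMap.pi (fun i => LinearMap.applyₗ (b i)) with hΦ
  have hker : LinearMap.ker Φ = ⊥ := by
    rw [LinearMap.ker_eq_bot']
    intro φ hφ
    refine b.ext fun i => ?_
    have := congrFun hφ i
    simpa [hΦ] using this
  have hcomp : (fun f : S => fun i : Fin r => u i (f : E)) =
      ⇑Φ ∘ (fun f : S => coordFun V (f : E)) := by
    funext f
    funext i
    show u i (f : E) = ((b i : V) : E → K) (f : E)
    rw [basisOf_coe u hu i]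
  rw [Indep, ← LinearMap.linearIndependent_iff Φ hker, hcomp]

lemma indep_card_le {r : ℕ} {V : Submodule K (E → K)} {u : Fin r → E → K}
    (hu : IsBasisOf u V) {S : Finset E} (hS : Indep V S) : S.card ≤ r := by
  have h := ((indep_iff_cols hu S).1 hS).fintype_card_le_finrank
  simpa [Module.finrank_fin_fun] using h

lemma indep_mono {V : Submodule K (E → K)} {S T : Finset E} (hsub : T ⊆ S)
    (h : Indep V S) : Indep V T := by
  apply h.comp (fun x : T => (⟨x.1, hsub x.2⟩ : S))
  intro a b hab
  apply Subtype.ext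
  simpa using congrArg Subtype.val hab

lemma indep_singleton {V : Submodule K (E → K)} (e : E) :
    Indep V {e} ↔ coordFun V e ≠ 0 := by
  haveI : Unique {x // x ∈ ({e} : Finset E)} :=
    ⟨⟨⟨e, Finset.mem_singleton_self e⟩⟩, by
      rintro ⟨x, hx⟩
      exact Subtype.ext (Finset.mem_singleton.1 hx)⟩
  rw [Indep, linearIndependent_unique_iff]
  have hd : ((default : {x // x ∈ ({e} : Finset E)}) : E) = e :=
    Finset.mem_singleton.1 (default : {x // x ∈ ({e} : Finset E)}).2
  simp [hd]

/-- Any configuration with a basis of `r` vectors admits an independent set of size `r`. -/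
lemma exists_indep_card {r : ℕ} {V : Submodule K (E → K)} {u : Fin r → E → K}
    (hu : IsBasisOf u V) : ∃ S : Finset E, Indep V S ∧ S.card = r := by
  classical
  set col : E → (Fin r → K) := fun f i => u i f with hcol
  -- the columns span `K^r`
  have hspan : Submodule.span K (Set.range col) = ⊤ := by
    by_contra hne
    obtain ⟨x, hx⟩ : ∃ x : Fin r → K, x ∉ Submodule.span K (Set.range col) := by
      by_contra hforall
      push_neg at hforall
      exact hne (Submodule.eq_top_iff'.2 hforall)
    set p := Submodule.span K (Set.range col)
    have hq : (Submodule.Quotient.mk x : (Fin r → K) ⧸ p) ≠ 0 := by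
      simpa [Submodule.Quotient.mk_eq_zero] using hx
    obtain ⟨φ, hφ⟩ : ∃ φ : Module.Dual K ((Fin r → K) ⧸ p),
        φ (Submodule.Quotient.mk x) ≠ 0 := by
      by_contra hforall
      push_neg at hforall
      exact hq ((Module.forall_dual_apply_eq_zero_iff K _).1 hforall)
    set ψ : (Fin r → K) →ₗ[K] K := φ.comp p.mkQ with hψ
    have hψcol : ∀ f : E, ψ (col f) = 0 := by
      intro f
      have : (col f) ∈ p := Submodule.subset_span ⟨f, rfl⟩
      simp [hψ, (Submodule.Quotient.mk_eq_zero p).2 this]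
    set lam : Fin r → K := fun i => ψ (Pi.single i 1) with hlam
    have hψeq : ∀ y : Fin r → K, ψ y = ∑ i, y i * lam i := by
      intro y
      have hy : y = ∑ i, y i • (Pi.single i (1 : K) : Fin r → K) := by
        funext j
        simp [Finset.sum_apply, Pi.single_apply, eq_comm]
      calc ψ y = ψ (∑ i, y i • (Pi.single i (1 : K) : Fin r → K)) := by rw [← hy]
        _ = ∑ i, y i * lam i := by
            rw [map_sum]
            exact Finset.sum_congr rfl fun i _ => by rw [map_smul, smul_eq_mul]
    have hlam0 : ∀ i, lam i = 0 := by
      have hzero : ∑ i, lam i • u i = 0 := by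
        funext f
        have := hψcol f
        rw [hψeq (col f)] at this
        simpa [Finset.sum_apply, hcol, mul_comm] using this
      exact Fintype.linearIndependent_iff.1 hu.1 lam hzero
    apply hφ
    have : ψ x = 0 := by rw [hψeq x]; simp [hlam0]
    simpa [hψ] using this
  obtain ⟨bs, hbsub, hbspan, hbli⟩ := exists_linearIndependent K (Set.range col)
  rw [hspan] at hbspan
  haveI : FiniteDimensional K (Fin r → K) := inferInstance
  have hbfin : bs.Finite := hbli.setFinite
  haveI hfty : Fintype bs := hbfin.fintype
  have hcardb : Fintype.card bs = r := by
    have hbbasis : Module.Basis bs K (Fin r → K) :=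
      Module.Basis.mk hbli (by rw [Subtype.range_coe, hbspan])
    have := Module.finrank_eq_card_basis hbbasis
    simpa [Module.finrank_fin_fun] using this.symm
  -- choose a preimage in `E` for each column in `bs`
  have hchoice : ∀ v : bs, ∃ f : E, col f = (v : Fin r → K) := fun v => hbsub v.2
  choose g hg using hchoice
  have hginj : Function.Injective g := by
    intro v₁ v₂ h
    apply Subtype.ext
    rw [← hg v₁, ← hg v₂, h]
  set S₀ : Finset E := Finset.univ.image g with hS₀
  refine ⟨S₀, ?_, ?_⟩
  · rw [indep_iff_cols hu]
    have hmem : ∀ f : {x // x ∈ S₀}, col (f : E) ∈ bs := by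
      rintro ⟨f, hf⟩
      obtain ⟨v, _, rfl⟩ := Finset.mem_image.1 hf
      rw [hg v]
      exact v.2
    set η : {x // x ∈ S₀} → bs := fun f => ⟨col (f : E), hmem f⟩ with hη
    have hηinj : Function.Injective η := by
      rintro ⟨f₁, hf₁⟩ ⟨f₂, hf₂⟩ h
      obtain ⟨v₁, _, rfl⟩ := Finset.mem_image.1 hf₁
      obtain ⟨v₂, _, rfl⟩ := Finset.mem_image.1 hf₂
      have : col (g v₁) = col (g v₂) := congrArg Subtype.val h
      rw [hg v₁, hg v₂] at this
      exact Subtype.ext (congrArg g (Subtype.ext this))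
    have := hbli.comp η hηinj
    exact this
  · rw [hS₀, Finset.card_image_of_injective _ hginj]
    simpa using hcardb

lemma isBase_of_indep {r : ℕ} {V : Submodule K (E → K)} {u : Fin r → E → K}
    (hu : IsBasisOf u V) {S : Finset E} (h : Indep V S) (hcard : S.card = r) :
    IsBase V S :=
  ⟨h, fun T hT => by rw [hcard]; exact indep_card_le hu hT⟩

/-- A set is a base of the matroid iff its `cSq` coefficient is nonzero. -/
lemma isBase_iff_cSq_ne {r : ℕ} {V : Submodule K (E → K)} {u : Fin r → E → K}
    (hu : IsBasisOf u V) (B : Finset E) :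
    IsBase V B ↔ cSq u B ≠ 0 := by
  constructor
  · rintro ⟨hind, hmax⟩
    have hcard : B.card = r := by
      refine le_antisymm (indep_card_le hu hind) ?_
      obtain ⟨S, hS, hScard⟩ := exists_indep_card hu
      rw [← hScard]; exact hmax S hS
    rw [cSq_of_card u hcard]
    set M : Matrix (Fin r) (Fin r) K :=
      Matrix.of fun i j : Fin r => u i ((Finset.equivFinOfCardEq hcard).symm j : E) with hM
    have hli : LinearIndependent K (fun j => M.transpose j) := by
      have h1 := (indep_iff_cols hu B).1 hind
      have h2 := h1.comp ((Finset.equivFinOfCardEq hcard).symm)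
        (Finset.equivFinOfCardEq hcard).symm.injective
      convert h2 using 1
      rfl
    have hdet : M.det ≠ 0 := by
      have := (Matrix.isUnit_iff_isUnit_det M).1 (Matrix.linearIndependent_cols_iff_isUnit.1 hli)
      exact this.ne_zero
    exact pow_ne_zero 2 hdet
  · intro hne
    have hcard : B.card = r := by
      by_contra hc
      rw [cSq, dif_neg hc] at hne
      exact hne rfl
    rw [cSq_of_card u hcard] at hne
    set M : Matrix (Fin r) (Fin r) K :=
      Matrix.of fun i j : Fin r => u i ((Finset.equivFinOfCardEq hcard).symm j : E) with hM
    have hdet : M.det ≠ 0 := fun h => hne (by rw [h]; ring)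
    have hli : LinearIndependent K (fun j => M.transpose j) :=
      Matrix.linearIndependent_cols_iff_isUnit.2
        ((Matrix.isUnit_iff_isUnit_det M).2 (isUnit_iff_ne_zero.2 hdet))
    have hind : Indep V B := by
      rw [indep_iff_cols hu]
      have h2 := hli.comp (Finset.equivFinOfCardEq hcard)
        (Finset.equivFinOfCardEq hcard).injective
      convert h2 using 1
      funext f
      funext i
      simp [hM]
    exact isBase_of_indep hu hind hcard

/-- The coordinate projection away from `e`. -/
noncomputable def projAway (e : E) : (E → K) →ₗ[K] ({x : E // x ∉ ({e} : Finset E)} → K) :=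
  LinearMap.funLeft K K (fun x : {x : E // x ∉ ({e} : Finset E)} => (x : E))

lemma projAway_apply (e : E) (v : E → K) (x : {x : E // x ∉ ({e} : Finset E)}) :
    projAway (K := K) e v x = v (x : E) := rfl

lemma ne_of_mem_subtype {e : E} (x : {x : E // x ∉ ({e} : Finset E)}) : (x : E) ≠ e := by
  have := x.2
  simpa [Finset.mem_singleton] using this

/-- If the vectors vanish at `e` and are independent, their projections are independent. -/
lemma li_projAway_of_vanish {k : ℕ} (e : E) (u : Fin k → E → K)
    (hli : LinearIndependent K u) (h0 : ∀ i, u i e = 0) :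
    LinearIndependent K (fun i => projAway (K := K) e (u i)) := by
  rw [Fintype.linearIndependent_iff] at hli ⊢
  intro c hc
  apply hli c
  funext f
  by_cases hf : f = e
  · subst hf
    simp [Finset.sum_apply, h0]
  · have := congrFun hc (⟨f, by simpa [Finset.mem_singleton] using hf⟩ :
      {x : E // x ∉ ({e} : Finset E)})
    simpa [Finset.sum_apply, projAway_apply] using this

/-- If some `B` avoiding `e` has nonzero coefficient, projections away from `e`
of the basis vectors are independent. -/
lemma li_projAway_of_cSq {k : ℕ} (e : E) (u : Fin k → E → K) {B : Finset E} (heB : e ∉ B)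
    (hne : cSq u B ≠ 0) :
    LinearIndependent K (fun i => projAway (K := K) e (u i)) := by
  have hcard : B.card = k := by
    by_contra hc
    rw [cSq, dif_neg hc] at hne
    exact hne rfl
  rw [cSq_of_card u hcard] at hne
  set M : Matrix (Fin k) (Fin k) K :=
    Matrix.of fun i j : Fin k => u i ((Finset.equivFinOfCardEq hcard).symm j : E) with hM
  have hdet : M.det ≠ 0 := fun h => hne (by rw [h]; ring)
  have hrows : LinearIndependent K (fun i => M i) :=
    Matrix.linearIndependent_rows_iff_isUnit.2
      ((Matrix.isUnit_iff_isUnit_det M).2 (isUnit_iff_ne_zero.2 hdet))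
  rw [Fintype.linearIndependent_iff] at hrows ⊢
  intro c hc
  apply hrows c
  funext j
  set f : E := ((Finset.equivFinOfCardEq hcard).symm j : E) with hf
  have hfB : f ∈ B := ((Finset.equivFinOfCardEq hcard).symm j).2
  have hfe : f ∉ ({e} : Finset E) := by
    simp only [Finset.mem_singleton]
    rintro rfl
    exact heB hfB
  have := congrFun hc (⟨f, hfe⟩ : {x : E // x ∉ ({e} : Finset E)})
  simpa [Finset.sum_apply, projAway_apply, hM, ← hf] using this

lemma span_projAway {k : ℕ} (e : E) (u : Fin k → E → K) (V : Submodule K (E → K))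
    (h : Submodule.span K (Set.range u) = V) :
    Submodule.span K (Set.range (fun i => projAway (K := K) e (u i)))
      = V.map (projAway (K := K) e) := by
  rw [← h, Submodule.map_span]
  congr 1
  exact Set.range_comp (projAway (K := K) e) u

lemma card_subtype_notMem {e : E} (B : Finset E) (heB : e ∉ B) :
    (B.subtype (fun x => x ∉ ({e} : Finset E))).card = B.card := by
  rw [Finset.card_subtype]
  congr 1
  refine Finset.filter_true_of_mem fun x hx => ?_
  simp only [Finset.mem_singleton]
  rintro rfl
  exact heB hx

lemma subtype_map_roundtrip {e : E} (B' : Finset {x : E // x ∉ ({e} : Finset E)}) :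
    ((B'.map (Function.Embedding.subtype _)).subtype (fun x => x ∉ ({e} : Finset E))) = B' := by
  ext x
  simp only [Finset.mem_subtype, Finset.mem_map, Function.Embedding.coe_subtype]
  constructor
  · rintro ⟨y, hy, h⟩
    rwa [show y = x from Subtype.ext h] at hy
  · intro hx
    exact ⟨x, hx, rfl⟩

lemma notMem_map_subtype {e : E} (B' : Finset {x : E // x ∉ ({e} : Finset E)}) :
    e ∉ B'.map (Function.Embedding.subtype _) := by
  intro h
  obtain ⟨y, _, hy⟩ := Finset.mem_map.1 h
  exact ne_of_mem_subtype y hy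

/-- `cSq` is unchanged under projection away from an unused coordinate. -/
lemma cSq_projAway {k : ℕ} (e : E) (u : Fin k → E → K) {B : Finset E} (heB : e ∉ B) :
    cSq (fun i => projAway (K := K) e (u i)) (B.subtype (fun x => x ∉ ({e} : Finset E)))
      = cSq u B := by
  by_cases h : B.card = k
  · have h' : (B.subtype (fun x => x ∉ ({e} : Finset E))).card = k := by
      rw [card_subtype_notMem B heB, h]
    set τ : {x // x ∈ B} ≃ {y // y ∈ B.subtype (fun x => x ∉ ({e} : Finset E))} :=
      { toFun := fun x => ⟨⟨x.1, by
          simp only [Finset.mem_singleton]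
          rintro rfl
          exact heB x.2⟩, Finset.mem_subtype.2 x.2⟩
        invFun := fun y => ⟨y.1.1, Finset.mem_subtype.1 y.2⟩
        left_inv := fun x => rfl
        right_inv := fun y => rfl } with hτ
    rw [cSq_eq_of_equiv u h (Equiv.refl _) (Finset.equivFinOfCardEq h).symm,
      cSq_eq_of_equiv (fun i => projAway (K := K) e (u i)) h' (Equiv.refl _)
        (((Finset.equivFinOfCardEq h).symm).trans τ)]
    rfl
  · have h' : ¬ (B.subtype (fun x => x ∉ ({e} : Finset E))).card = k := by
      rw [card_subtype_notMem B heB]; exact h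
    rw [cSq, dif_neg h', cSq, dif_neg h]

/-- The part of `psi` over sets avoiding `e` is the renamed `psi` of the projected family. -/
lemma sum_delete {k : ℕ} (e : E) (u : Fin k → E → K) :
    ∑ B ∈ (Finset.univ.powersetCard k).filter (fun B => e ∉ B),
        MvPolynomial.C (cSq u B) * ∏ f ∈ B, MvPolynomial.X f
      = MvPolynomial.rename Subtype.val (psi (fun i => projAway (K := K) e (u i))) := by
  rw [psi, map_sum]
  refine Finset.sum_nbij' (fun B => B.subtype (fun x => x ∉ ({e} : Finset E)))
    (fun B' => B'.map (Function.Embedding.subtype _)) ?_ ?_ ?_ ?_ ?_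
  · intro B hB
    rw [Finset.mem_filter, Finset.mem_powersetCard] at hB
    rw [Finset.mem_powersetCard]
    exact ⟨Finset.subset_univ _, by rw [card_subtype_notMem B hB.2, hB.1.2]⟩
  · intro B' hB'
    rw [Finset.mem_powersetCard] at hB'
    rw [Finset.mem_filter, Finset.mem_powersetCard]
    exact ⟨⟨Finset.subset_univ _, by rw [Finset.card_map, hB'.2]⟩, notMem_map_subtype B'⟩
  · intro B hB
    rw [Finset.mem_filter] at hB
    exact Finset.subtype_map_of_mem fun x hx => by
      simp only [Finset.mem_singleton]
      rintro rfl
      exact hB.2 hx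
  · intro B' _
    exact subtype_map_roundtrip B'
  · intro B hB
    rw [Finset.mem_filter] at hB
    rw [map_mul, rename_C, cSq_projAway e u hB.2, map_prod]
    congr 1
    have hmap : B = (B.subtype (fun x => x ∉ ({e} : Finset E))).map
        (Function.Embedding.subtype _) :=
      (Finset.subtype_map_of_mem fun x hx => by
        simp only [Finset.mem_singleton]
        rintro rfl
        exact hB.2 hx).symm
    conv_lhs => rw [hmap]
    rw [Finset.prod_map]
    exact Finset.prod_congr rfl fun x _ => by rw [rename_X]; rfl

/-- Cofactor expansion: for an adapted family, erasing `e` drops the last vector. -/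
lemma cSq_cofactor {m : ℕ} (e : E) (u : Fin (m + 1) → E → K)
    (h0 : ∀ i : Fin m, u i.castSucc e = 0) (h1 : u (Fin.last m) e = 1)
    {B : Finset E} (hB : B.card = m + 1) (he : e ∈ B) :
    cSq u B = cSq (fun i : Fin m => u i.castSucc) (B.erase e) := by
  have hBe : (B.erase e).card = m := by
    rw [Finset.card_erase_of_mem he, hB]
    omega
  set ι : Fin m ⊕ Fin 1 → {x // x ∈ B} := fun x => Sum.rec
    (fun l => ⟨((Finset.equivFinOfCardEq hBe).symm l : E),
      Finset.mem_of_mem_erase ((Finset.equivFinOfCardEq hBe).symm l).2⟩)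
    (fun _ => ⟨e, he⟩) x with hι
  have hinj : Function.Injective ι := by
    rintro (l₁ | o₁) (l₂ | o₂) h
    · have h2 := congrArg (Subtype.val : {x // x ∈ B} → E) h
      rw [Sum.inl.injEq]
      exact (Finset.equivFinOfCardEq hBe).symm.injective (Subtype.ext h2)
    · exact absurd (congrArg Subtype.val h)
        (Finset.ne_of_mem_erase ((Finset.equivFinOfCardEq hBe).symm l₁).2)
    · exact absurd (congrArg Subtype.val h).symm
        (Finset.ne_of_mem_erase ((Finset.equivFinOfCardEq hBe).symm l₂).2)
    · rw [Sum.inr.injEq]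
      exact Subsingleton.elim _ _
  have hbij : Function.Bijective ι := by
    rw [Fintype.bijective_iff_injective_and_card]
    refine ⟨hinj, ?_⟩
    simp [hB]
  set ce : (Fin m ⊕ Fin 1) ≃ {x // x ∈ B} := Equiv.ofBijective ι hbij with hce
  rw [cSq_eq_of_equiv u hB finSumFinEquiv ce]
  have hmat : (Matrix.of fun i j : Fin m ⊕ Fin 1 =>
        u (finSumFinEquiv i) ((ce j : {x // x ∈ B}) : E)) =
      Matrix.fromBlocks
        (Matrix.of fun i j : Fin m =>
          u i.castSucc ((Finset.equivFinOfCardEq hBe).symm j : E))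
        0
        (Matrix.of fun (_ : Fin 1) j =>
          u (Fin.last m) ((Finset.equivFinOfCardEq hBe).symm j : E))
        (1 : Matrix (Fin 1) (Fin 1) K) := by
    funext i j
    have hlast : ∀ o : Fin 1, finSumFinEquiv (Sum.inr o : Fin m ⊕ Fin 1) = Fin.last m := by
      intro o
      have : o = 0 := Subsingleton.elim _ _
      subst this
      apply Fin.ext
      simp [finSumFinEquiv_apply_right]
    rcases i with i | i <;> rcases j with j | j
    · show u (finSumFinEquiv (Sum.inl i)) ((ι (Sum.inl j) : {x // x ∈ B}) : E)
        = u i.castSucc ((Finset.equivFinOfCardEq hBe).symm j : E)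
      rw [finSumFinEquiv_apply_left]
      rfl
    · show u (finSumFinEquiv (Sum.inl i)) ((ι (Sum.inr j) : {x // x ∈ B}) : E) = 0
      rw [finSumFinEquiv_apply_left]
      exact h0 i
    · show u (finSumFinEquiv (Sum.inr i)) ((ι (Sum.inl j) : {x // x ∈ B}) : E)
        = u (Fin.last m) ((Finset.equivFinOfCardEq hBe).symm j : E)
      rw [hlast i]
    · show u (finSumFinEquiv (Sum.inr i)) ((ι (Sum.inr j) : {x // x ∈ B}) : E)
        = (1 : Matrix (Fin 1) (Fin 1) K) i j
      rw [hlast i]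
      have hij : i = j := Subsingleton.elim _ _
      subst hij
      rw [Matrix.one_apply_eq]
      exact h1
  rw [hmat, Matrix.det_fromBlocks_zero₁₂, Matrix.det_one, mul_one, cSq_of_card _ hBe]

/-- The part of `psi` over sets containing `e`, for an adapted family. -/
lemma sum_contract {m : ℕ} (e : E) (u : Fin (m + 1) → E → K)
    (h0 : ∀ i : Fin m, u i.castSucc e = 0) (h1 : u (Fin.last m) e = 1) :
    ∑ B ∈ (Finset.univ.powersetCard (m + 1)).filter (fun B => e ∈ B),
        MvPolynomial.C (cSq u B) * ∏ f ∈ B, MvPolynomial.X f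
      = MvPolynomial.X e * MvPolynomial.rename Subtype.val
          (psi (fun i : Fin m => projAway (K := K) e (u i.castSucc))) := by
  rw [psi, map_sum, Finset.mul_sum]
  refine Finset.sum_nbij' (fun B => (B.erase e).subtype (fun x => x ∉ ({e} : Finset E)))
    (fun B' => insert e (B'.map (Function.Embedding.subtype _))) ?_ ?_ ?_ ?_ ?_
  · intro B hB
    rw [Finset.mem_filter, Finset.mem_powersetCard] at hB
    rw [Finset.mem_powersetCard]
    refine ⟨Finset.subset_univ _, ?_⟩
    rw [card_subtype_notMem _ (Finset.notMem_erase e B), Finset.card_erase_of_mem hB.2,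
      hB.1.2]
    omega
  · intro B' hB'
    rw [Finset.mem_powersetCard] at hB'
    rw [Finset.mem_filter, Finset.mem_powersetCard]
    refine ⟨⟨Finset.subset_univ _, ?_⟩, Finset.mem_insert_self e _⟩
    rw [Finset.card_insert_of_notMem (notMem_map_subtype B'), Finset.card_map, hB'.2]
  · intro B hB
    rw [Finset.mem_filter] at hB
    show insert e (((B.erase e).subtype (fun x => x ∉ ({e} : Finset E))).map
      (Function.Embedding.subtype _)) = B
    rw [Finset.subtype_map_of_mem fun x hx => by
      simp only [Finset.mem_singleton]
      rintro rfl
      exact Finset.notMem_erase _ _ hx]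
    exact Finset.insert_erase hB.2
  · intro B' _
    show ((insert e (B'.map (Function.Embedding.subtype _))).erase e).subtype
      (fun x => x ∉ ({e} : Finset E)) = B'
    rw [Finset.erase_insert (notMem_map_subtype B')]
    exact subtype_map_roundtrip B'
  · intro B hB
    rw [Finset.mem_filter, Finset.mem_powersetCard] at hB
    have hc : cSq u B = cSq (fun i : Fin m => projAway (K := K) e (u i.castSucc))
        ((B.erase e).subtype (fun x => x ∉ ({e} : Finset E))) := by
      rw [cSq_cofactor e u h0 h1 hB.1.2 hB.2,
        ← cSq_projAway e (fun i : Fin m => u i.castSucc) (Finset.notMem_erase e B)]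
    have hp : (∏ f ∈ B, MvPolynomial.X f : MvPolynomial E K)
        = MvPolynomial.X e * ∏ x ∈ (B.erase e).subtype (fun x => x ∉ ({e} : Finset E)),
            MvPolynomial.X ((x : {x : E // x ∉ ({e} : Finset E)}) : E) := by
      rw [← Finset.mul_prod_erase B _ hB.2]
      congr 1
      have hmap : B.erase e = ((B.erase e).subtype (fun x => x ∉ ({e} : Finset E))).map
          (Function.Embedding.subtype _) :=
        (Finset.subtype_map_of_mem fun x hx => by
          simp only [Finset.mem_singleton]
          rintro rfl
          exact Finset.notMem_erase _ _ hx).symm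
      conv_lhs => rw [hmap]
      rw [Finset.prod_map]
      rfl
    rw [hc, hp, map_mul, rename_C, map_prod]
    simp only [rename_X]
    ring

lemma mem_ker_single_iff (e : E) (v : E → K) :
    v ∈ LinearMap.ker (LinearMap.funLeft K K
      (fun x : {x : E // x ∈ ({e} : Finset E)} => (x : E))) ↔ v e = 0 := by
  rw [LinearMap.mem_ker]
  constructor
  · intro h
    exact congrFun h ⟨e, Finset.mem_singleton_self e⟩
  · intro h
    funext x
    have hx : (x : E) = e := Finset.mem_singleton.1 x.2
    show v (x : E) = 0
    rw [hx]
    exact h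

lemma span_range_coe {V₀ : Submodule K (E → K)} {k : ℕ} (b : Module.Basis (Fin k) K V₀) :
    Submodule.span K (Set.range (fun i => ((b i : V₀) : E → K))) = V₀ := by
  have h1 : (fun i => ((b i : V₀) : E → K)) = (V₀.subtype) ∘ ⇑b := rfl
  rw [h1, Set.range_comp, ← Submodule.map_span, b.span_eq, Submodule.map_top,
    Submodule.range_subtype]

/-- Existence of a basis adapted to a non-loop element `e`. -/
lemma exists_adapted (W : Submodule K (E → K)) (e : E) {v : E → K} (hv : v ∈ W)
    (hve : v e = 1) :
    ∃ (m : ℕ) (u : Fin (m + 1) → E → K),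
      IsBasisOf u W ∧ (∀ i : Fin m, u i.castSucc e = 0) ∧ u (Fin.last m) e = 1 ∧
      IsBasisOf (fun i : Fin m => projAway (K := K) e (u i.castSucc))
        (contractConfig W {e}) := by
  classical
  set kerE := LinearMap.ker (LinearMap.funLeft K K
    (fun x : {x : E // x ∈ ({e} : Finset E)} => (x : E))) with hkerE
  set W₀ := W ⊓ kerE with hW₀
  set m := Module.finrank K W₀ with hm
  set b₀ := Module.finBasis K W₀ with hb₀
  set u : Fin (m + 1) → E → K := Fin.snoc (fun i => ((b₀ i : W₀) : E → K)) v with hu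
  have hucast : ∀ i : Fin m, u i.castSucc = ((b₀ i : W₀) : E → K) := fun i => by
    simp [hu, Fin.snoc_castSucc]
  have hulast : u (Fin.last m) = v := by simp [hu, Fin.snoc_last]
  have hmem0 : ∀ x : W₀, ((x : W₀) : E → K) e = 0 := fun x =>
    (mem_ker_single_iff e _).1 x.2.2
  have h0 : ∀ i : Fin m, u i.castSucc e = 0 := fun i => by
    rw [hucast i]
    exact hmem0 (b₀ i)
  have h1 : u (Fin.last m) e = 1 := by rw [hulast]; exact hve
  have huli : LinearIndependent K u := by
    rw [Fintype.linearIndependent_iff]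
    intro c hc
    have hsplit : ∑ i : Fin m, c i.castSucc • u i.castSucc
        + c (Fin.last m) • u (Fin.last m) = 0 := by
      rw [Fin.sum_univ_castSucc] at hc
      exact hc
    have hce : c (Fin.last m) = 0 := by
      have h2 := congrFun hsplit e
      rw [Pi.add_apply, Finset.sum_apply] at h2
      simp only [Pi.smul_apply, smul_eq_mul, h0, mul_zero, Finset.sum_const_zero,
        zero_add, hulast, hve, mul_one, Pi.zero_apply] at h2
      exact h2
    have hsum0 : ∑ i : Fin m, c i.castSucc • u i.castSucc = 0 := by
      rwa [hce, zero_smul, add_zero] at hsplit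
    have hval : ((∑ i : Fin m, c i.castSucc • b₀ i : W₀) : E → K)
        = ∑ i : Fin m, c i.castSucc • u i.castSucc := by
      push_cast
      exact Finset.sum_congr rfl fun i _ => by rw [hucast i]
    have hin : (∑ i : Fin m, c i.castSucc • b₀ i : W₀) = 0 := by
      apply Subtype.ext
      rw [hval, hsum0]
      simp
    have hd := Fintype.linearIndependent_iff.1 b₀.linearIndependent _ hin
    intro i
    refine Fin.lastCases ?_ ?_ i
    · exact hce
    · exact fun j => hd j
  have hspan : Submodule.span K (Set.range u) = W := by
    apply le_antisymm
    · rw [Submodule.span_le]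
      rintro x ⟨i, rfl⟩
      refine Fin.lastCases ?_ ?_ i
      · rw [hulast]; exact hv
      · intro j
        rw [hucast j]
        exact (b₀ j).2.1
    · intro x hx
      have hy : x - x e • v ∈ W₀ := by
        refine ⟨Submodule.sub_mem W hx (Submodule.smul_mem W _ hv), ?_⟩
        apply (mem_ker_single_iff e _).2
        simp [hve]
      have hy' : x - x e • v ∈ Submodule.span K (Set.range u) := by
        have h3 : (W₀ : Submodule K (E → K)) = Submodule.span K
            (Set.range fun i => ((b₀ i : W₀) : E → K)) := (span_range_coe b₀).symm
        rw [h3] at hy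
        refine Submodule.span_mono ?_ hy
        rintro y ⟨i, rfl⟩
        exact ⟨i.castSucc, hucast i⟩
      have hv' : v ∈ Submodule.span K (Set.range u) :=
        Submodule.subset_span ⟨Fin.last m, hulast⟩
      have hxs := Submodule.add_mem _ hy' (Submodule.smul_mem _ (x e) hv')
      simpa using hxs
  have hseq : Submodule.span K (Set.range fun i : Fin m => u i.castSucc)
      = (W₀ : Submodule K (E → K)) := by
    have h4 : (fun i : Fin m => u i.castSucc) = fun i => ((b₀ i : W₀) : E → K) :=
      funext hucast
    rw [h4]
    exact span_range_coe b₀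
  have hcontract : contractConfig W {e} = W₀.map (projAway (K := K) e) := rfl
  have hpli : LinearIndependent K (fun i : Fin m => projAway (K := K) e (u i.castSucc)) := by
    apply li_projAway_of_vanish e (fun i : Fin m => u i.castSucc) ?_ h0
    exact huli.comp (Fin.castSucc) (Fin.castSucc_injective m)
  refine ⟨m, u, ⟨huli, hspan⟩, h0, h1, hpli, ?_⟩
  rw [hcontract]
  exact span_projAway e (fun i : Fin m => u i.castSucc) W₀ hseq

/-- Independence in the deletion lifts to independence in `W`. -/
lemma indep_of_delete {W : Submodule K (E → K)} {e : E}
    {S' : Finset {x : E // x ∉ ({e} : Finset E)}}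
    (h : Indep (deleteConfig W {e}) S') :
    Indep W (S'.map (Function.Embedding.subtype _)) := by
  classical
  set θ : {x // x ∈ S'} → {x // x ∈ S'.map (Function.Embedding.subtype _)} := fun t =>
    ⟨((t : {x : E // x ∉ ({e} : Finset E)}) : E),
      Finset.mem_map_of_mem _ t.2⟩ with hθ
  have hθbij : Function.Bijective θ := by
    rw [Fintype.bijective_iff_injective_and_card]
    constructor
    · intro t₁ t₂ ht
      have h2 := congrArg
        (fun z : {x // x ∈ S'.map (Function.Embedding.subtype
          (fun x : E => x ∉ ({e} : Finset E)))} => (z : E)) ht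
      exact Subtype.ext (Subtype.ext h2)
    · rw [Fintype.card_coe, Fintype.card_coe, Finset.card_map]
  set θe := Equiv.ofBijective θ hθbij with hθe
  rw [Indep, Fintype.linearIndependent_iff]
  intro c hc
  rw [Indep, Fintype.linearIndependent_iff] at h
  have hsum : ∑ t : {x // x ∈ S'}, c (θ t) • coordFun (deleteConfig W {e})
      ((t : {x : E // x ∉ ({e} : Finset E)})) = 0 := by
    apply LinearMap.ext
    rintro ⟨y, hy⟩
    obtain ⟨x, hxW, hxy⟩ := hy
    have h2 := congrArg (fun φ : W →ₗ[K] K => φ ⟨x, hxW⟩) hc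
    simp only [LinearMap.sum_apply, LinearMap.smul_apply, smul_eq_mul,
      LinearMap.zero_apply] at h2 ⊢
    rw [← h2]
    apply Fintype.sum_equiv θe
    intro t
    have hyt : y ((t : {x : E // x ∉ ({e} : Finset E)})) =
        x (((t : {x : E // x ∉ ({e} : Finset E)})) : E) := by
      rw [← hxy]
      rfl
    show c (θ t) * y _ = c (θe t) * x _
    rw [hyt]
    rfl
  have hz := h _ hsum
  intro s
  have hs := hz (θe.symm s)
  rwa [show θ (θe.symm s) = s from θe.apply_symm_apply s] at hs

lemma pderiv_rename_eq_zero (e : E) (q : MvPolynomial {x : E // x ∉ ({e} : Finset E)} K) :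
    MvPolynomial.pderiv e (MvPolynomial.rename
      (Subtype.val : {x : E // x ∉ ({e} : Finset E)} → E) q) = 0 := by
  induction q using MvPolynomial.induction_on with
  | C a => rw [rename_C]; simp
  | add p q hp hq => rw [map_add, map_add, hp, hq, add_zero]
  | mul_X p s hp =>
      rw [map_mul, rename_X, pderiv_mul, hp, pderiv_X_of_ne (ne_of_mem_subtype s)]
      simp

/-- **Theorem (Deletion–contraction for configuration polynomials).**
Let `W ⊆ K^E` realize a matroid `M` and let `e ∈ E`.  Up to nonzero square constant
factors: `ψ_W = ψ_{W∖e} = ψ_{W/e}` if `e` is a loop; `ψ_W = x_e·ψ_{W∖e} = x_e·ψ_{W/e}`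
if `e` is a coloop; and `ψ_W = ψ_{W∖e} + x_e·ψ_{W/e}` otherwise, in which case
`∂ψ_W/∂x_e = ψ_{W/e}` and `ψ_W|_{x_e = 0} = ψ_{W∖e}`. -/
theorem psi_deletion_contraction
    (W : Submodule K (E → K)) (e : E) {r rd rc : ℕ}
    (w : Fin r → E → K)
    (wd : Fin rd → {x : E // x ∉ ({e} : Finset E)} → K)
    (wc : Fin rc → {x : E // x ∉ ({e} : Finset E)} → K)
    (hw : IsBasisOf w W)
    (hwd : IsBasisOf wd (deleteConfig W {e}))
    (hwc : IsBasisOf wc (contractConfig W {e})) :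
    (¬ Indep W {e} →
      ∃ a b : K, a ≠ 0 ∧ b ≠ 0 ∧
        psi w = MvPolynomial.C (a ^ 2) * MvPolynomial.rename Subtype.val (psi wd) ∧
        psi w = MvPolynomial.C (b ^ 2) * MvPolynomial.rename Subtype.val (psi wc)) ∧
    ((∀ B : Finset E, IsBase W B → e ∈ B) →
      ∃ a b : K, a ≠ 0 ∧ b ≠ 0 ∧
        psi w = MvPolynomial.C (a ^ 2) * MvPolynomial.X e *
          MvPolynomial.rename Subtype.val (psi wd) ∧
        psi w = MvPolynomial.C (b ^ 2) * MvPolynomial.X e *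
          MvPolynomial.rename Subtype.val (psi wc)) ∧
    (Indep W {e} → ¬ (∀ B : Finset E, IsBase W B → e ∈ B) →
      ∃ a b : K, a ≠ 0 ∧ b ≠ 0 ∧
        psi w = MvPolynomial.C (a ^ 2) * MvPolynomial.rename Subtype.val (psi wd)
              + MvPolynomial.C (b ^ 2) * MvPolynomial.X e *
                  MvPolynomial.rename Subtype.val (psi wc) ∧
        MvPolynomial.pderiv e (psi w) =
          MvPolynomial.C (b ^ 2) * MvPolynomial.rename Subtype.val (psi wc) ∧
        MvPolynomial.aeval (fun f : E => if f = e then 0 else MvPolynomial.X f) (psi w) =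
          MvPolynomial.C (a ^ 2) * MvPolynomial.rename Subtype.val (psi wd)) := by
  classical
  refine ⟨?_, ?_, ?_⟩
  -- Case 1: e is a loop
  · intro hloop
    have hcoord : coordFun W e = 0 := by
      by_contra hne
      exact hloop ((indep_singleton e).2 hne)
    have hW0 : ∀ x ∈ W, x e = 0 := fun x hx => by
      have h2 := congrArg (fun φ : W →ₗ[K] K => φ ⟨x, hx⟩) hcoord
      simpa [coordFun] using h2
    have hw0 : ∀ i, w i e = 0 := fun i => hW0 (w i) (mem_of_isBasisOf hw i)
    have hdbasis : IsBasisOf (fun i => projAway (K := K) e (w i)) (deleteConfig W {e}) :=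
      ⟨li_projAway_of_vanish e w hw.1 hw0, span_projAway e w W hw.2⟩
    have hWker : W ≤ LinearMap.ker (LinearMap.funLeft K K
        (fun x : {x : E // x ∈ ({e} : Finset E)} => (x : E))) := fun x hx =>
      (mem_ker_single_iff e x).2 (hW0 x hx)
    have hcd : contractConfig W {e} = deleteConfig W {e} := by
      unfold contractConfig deleteConfig
      rw [inf_eq_left.2 hWker]
    have hpsi : psi w = MvPolynomial.rename Subtype.val
        (psi (fun i => projAway (K := K) e (w i))) := by
      have hz : ∀ B ∈ (Finset.univ.powersetCard r).filter (fun B => ¬ e ∉ B),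
          MvPolynomial.C (cSq w B) * ∏ f ∈ B, MvPolynomial.X f = 0 := by
        intro B hB
        rw [Finset.mem_filter, not_not] at hB
        rw [cSq_eq_zero_of_col w hB.2 hw0, map_zero, zero_mul]
      rw [psi, ← Finset.sum_filter_add_sum_filter_not (Finset.univ.powersetCard r)
        (fun B => e ∉ B), Finset.sum_eq_zero hz, add_zero, sum_delete e w]
    obtain ⟨a, ha, hpa⟩ := psi_eq_of_isBasisOf hwd hdbasis
    have hcdbasis : IsBasisOf (fun i => projAway (K := K) e (w i)) (contractConfig W {e}) := by
      rw [hcd]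
      exact hdbasis
    obtain ⟨b, hb, hpb⟩ := psi_eq_of_isBasisOf hwc hcdbasis
    refine ⟨a, b, ha, hb, ?_, ?_⟩
    · rw [hpsi, hpa, map_mul, rename_C]
    · rw [hpsi, hpb, map_mul, rename_C]
  -- Case 2: e is a coloop
  · intro h2
    obtain ⟨S, hS, hScard⟩ := exists_indep_card hw
    have hSbase : IsBase W S := isBase_of_indep hw hS hScard
    have heS : e ∈ S := h2 S hSbase
    have hIe : Indep W {e} := indep_mono (Finset.singleton_subset_iff.2 heS) hS
    have hcoord : coordFun W e ≠ 0 := (indep_singleton e).1 hIe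
    obtain ⟨x0, hx0⟩ : ∃ x0 : W, coordFun W e x0 ≠ 0 := by
      by_contra hall
      push_neg at hall
      exact hcoord (LinearMap.ext hall)
    set v : E → K := ((x0 : E → K) e)⁻¹ • (x0 : E → K) with hv
    have hvW : v ∈ W := Submodule.smul_mem W _ x0.2
    have hx0e : (x0 : E → K) e ≠ 0 := hx0
    have hve : v e = 1 := by
      rw [hv]
      simp only [Pi.smul_apply, smul_eq_mul]
      exact inv_mul_cancel₀ hx0e
    obtain ⟨m, u, huW, h0, h1, hcon⟩ := exists_adapted W e hvW hve
    have hdelta : Pi.single e 1 ∈ W := by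
      by_contra hδ
      have hpli : LinearIndependent K (fun i => projAway (K := K) e (u i)) := by
        rw [Fintype.linearIndependent_iff]
        intro c hc
        by_contra hcne
        push_neg at hcne
        obtain ⟨i0, hi0⟩ := hcne
        set v0 : E → K := ∑ i, c i • u i with hv0
        have hv0W : v0 ∈ W := Submodule.sum_mem W fun i _ =>
          Submodule.smul_mem W _ (mem_of_isBasisOf huW i)
        have hv0off : ∀ f : E, f ≠ e → v0 f = 0 := by
          intro f hf
          have h3 := congrFun hc (⟨f, by simpa [Finset.mem_singleton] using hf⟩ :
            {x : E // x ∉ ({e} : Finset E)})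
          simpa [hv0, Finset.sum_apply, projAway_apply] using h3
        have hv0ne : v0 ≠ 0 := by
          intro hzero
          have h4 := Fintype.linearIndependent_iff.1 huW.1 c (by rw [← hv0]; exact hzero)
          exact hi0 (h4 i0)
        have hv0e : v0 e ≠ 0 := by
          intro hze
          apply hv0ne
          funext f
          by_cases hf : f = e
          · rw [hf]; exact hze
          · exact hv0off f hf
        have hsingle : Pi.single e 1 = (v0 e)⁻¹ • v0 := by
          funext f
          by_cases hf : f = e
          · subst hf
            simp [Pi.single_eq_same, inv_mul_cancel₀ hv0e]
          · simp [Pi.single_eq_of_ne hf, hv0off f hf]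
        exact hδ (by rw [hsingle]; exact Submodule.smul_mem W _ hv0W)
      have hdbasis : IsBasisOf (fun i => projAway (K := K) e (u i)) (deleteConfig W {e}) :=
        ⟨hpli, span_projAway e u W huW.2⟩
      obtain ⟨S', hS', hS'card⟩ := exists_indep_card hdbasis
      have hSind := indep_of_delete (W := W) (e := e) hS'
      have hSmap : (S'.map (Function.Embedding.subtype _)).card = m + 1 := by
        rw [Finset.card_map, hS'card]
      exact notMem_map_subtype S' (h2 _ (isBase_of_indep huW hSind hSmap))
    have hδπ : projAway (K := K) e (Pi.single e 1 : E → K) = 0 := by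
      funext x
      rw [projAway_apply]
      exact Pi.single_eq_of_ne (ne_of_mem_subtype x) 1
    have hdel_eq : deleteConfig W {e} = W.map (projAway (K := K) e) := rfl
    have hcon_eq : contractConfig W {e} = (W ⊓ LinearMap.ker (LinearMap.funLeft K K
        (fun x : {x : E // x ∈ ({e} : Finset E)} => (x : E)))).map (projAway (K := K) e) := rfl
    have hcd : deleteConfig W {e} = contractConfig W {e} := by
      rw [hdel_eq, hcon_eq]
      apply le_antisymm
      · intro y hy
        obtain ⟨x, hx, rfl⟩ := Submodule.mem_map.1 hy
        refine Submodule.mem_map.2 ⟨x - x e • (Pi.single e 1 : E → K),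
          ⟨Submodule.sub_mem W hx (Submodule.smul_mem W _ hdelta),
            (mem_ker_single_iff e _).2 (by simp)⟩, ?_⟩
        rw [map_sub, map_smul, hδπ, smul_zero, sub_zero]
      · exact Submodule.map_mono inf_le_left
    have hz : ∀ B ∈ (Finset.univ.powersetCard (m + 1)).filter (fun B => ¬ e ∈ B),
        MvPolynomial.C (cSq u B) * ∏ f ∈ B, MvPolynomial.X f = 0 := by
      intro B hB
      rw [Finset.mem_filter] at hB
      have hzero : cSq u B = 0 := by
        by_contra hne
        exact hB.2 (h2 B ((isBase_iff_cSq_ne huW B).2 hne))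
      rw [hzero, map_zero, zero_mul]
    have hpsiu : psi u = MvPolynomial.X e * MvPolynomial.rename Subtype.val
        (psi (fun i : Fin m => projAway (K := K) e (u i.castSucc))) := by
      rw [psi, ← Finset.sum_filter_add_sum_filter_not (Finset.univ.powersetCard (m + 1))
        (fun B => e ∈ B), Finset.sum_eq_zero hz, add_zero, sum_contract e u h0 h1]
    obtain ⟨c0, hc0, hpc0⟩ := psi_eq_of_isBasisOf huW hw
    have hconD : IsBasisOf (fun i : Fin m => projAway (K := K) e (u i.castSucc))
        (deleteConfig W {e}) := by
      rw [hcd]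
      exact hcon
    obtain ⟨ad, had, hpad⟩ := psi_eq_of_isBasisOf hwd hconD
    obtain ⟨ac, hac, hpac⟩ := psi_eq_of_isBasisOf hwc hcon
    refine ⟨c0 * ad, c0 * ac, mul_ne_zero hc0 had, mul_ne_zero hc0 hac, ?_, ?_⟩
    · rw [hpc0, hpsiu, hpad, map_mul, rename_C, mul_pow, MvPolynomial.C_mul]
      ring
    · rw [hpc0, hpsiu, hpac, map_mul, rename_C, mul_pow, MvPolynomial.C_mul]
      ring
  -- Case 3: e is neither a loop nor a coloop
  · intro hIe hnc
    have hcoord : coordFun W e ≠ 0 := (indep_singleton e).1 hIe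
    obtain ⟨x0, hx0⟩ : ∃ x0 : W, coordFun W e x0 ≠ 0 := by
      by_contra hall
      push_neg at hall
      exact hcoord (LinearMap.ext hall)
    set v : E → K := ((x0 : E → K) e)⁻¹ • (x0 : E → K) with hv
    have hvW : v ∈ W := Submodule.smul_mem W _ x0.2
    have hx0e : (x0 : E → K) e ≠ 0 := hx0
    have hve : v e = 1 := by
      rw [hv]
      simp only [Pi.smul_apply, smul_eq_mul]
      exact inv_mul_cancel₀ hx0e
    obtain ⟨m, u, huW, h0, h1, hcon⟩ := exists_adapted W e hvW hve
    push_neg at hnc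
    obtain ⟨B₀, hB₀base, hB₀e⟩ := hnc
    have hcB₀ : cSq u B₀ ≠ 0 := (isBase_iff_cSq_ne huW B₀).1 hB₀base
    have hpli := li_projAway_of_cSq e u hB₀e hcB₀
    have hdbasis : IsBasisOf (fun i => projAway (K := K) e (u i)) (deleteConfig W {e}) :=
      ⟨hpli, span_projAway e u W huW.2⟩
    have hpsiu : psi u
        = MvPolynomial.rename Subtype.val (psi (fun i => projAway (K := K) e (u i)))
          + MvPolynomial.X e * MvPolynomial.rename Subtype.val
              (psi (fun i : Fin m => projAway (K := K) e (u i.castSucc))) := by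
      rw [psi, ← Finset.sum_filter_add_sum_filter_not (Finset.univ.powersetCard (m + 1))
        (fun B => e ∈ B), sum_contract e u h0 h1, sum_delete e u]
      ring
    obtain ⟨c0, hc0, hpc0⟩ := psi_eq_of_isBasisOf huW hw
    obtain ⟨ad, had, hpad⟩ := psi_eq_of_isBasisOf hwd hdbasis
    obtain ⟨ac, hac, hpac⟩ := psi_eq_of_isBasisOf hwc hcon
    have hkey : psi w = MvPolynomial.C ((c0 * ad) ^ 2) *
          MvPolynomial.rename Subtype.val (psi wd)
        + MvPolynomial.C ((c0 * ac) ^ 2) * MvPolynomial.X e *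
            MvPolynomial.rename Subtype.val (psi wc) := by
      rw [hpc0, hpsiu, hpad, hpac, map_mul, map_mul, rename_C, rename_C,
        mul_pow, mul_pow, MvPolynomial.C_mul, MvPolynomial.C_mul]
      ring
    refine ⟨c0 * ad, c0 * ac, mul_ne_zero hc0 had, mul_ne_zero hc0 hac, hkey, ?_, ?_⟩
    · rw [hkey, map_add]
      have hd1 : MvPolynomial.pderiv e (MvPolynomial.C ((c0 * ad) ^ 2) *
          MvPolynomial.rename Subtype.val (psi wd)) = 0 := by
        rw [MvPolynomial.pderiv_C_mul, pderiv_rename_eq_zero, mul_zero]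
      have hd2 : MvPolynomial.pderiv e (MvPolynomial.C ((c0 * ac) ^ 2) * MvPolynomial.X e *
          MvPolynomial.rename Subtype.val (psi wc))
          = MvPolynomial.C ((c0 * ac) ^ 2) * MvPolynomial.rename Subtype.val (psi wc) := by
        rw [mul_assoc, MvPolynomial.pderiv_C_mul, MvPolynomial.pderiv_mul,
          pderiv_rename_eq_zero, mul_zero, add_zero, MvPolynomial.pderiv_X_self, one_mul]
      rw [hd1, hd2, zero_add]
    · rw [hkey, map_add]
      have ha1 : MvPolynomial.aeval (fun f : E => if f = e then 0 else MvPolynomial.X f)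
          (MvPolynomial.C ((c0 * ad) ^ 2) * MvPolynomial.rename Subtype.val (psi wd))
          = MvPolynomial.C ((c0 * ad) ^ 2) *
            MvPolynomial.rename Subtype.val (psi wd) := by
        rw [map_mul, MvPolynomial.aeval_C, MvPolynomial.algebraMap_eq]
        congr 1
        rw [MvPolynomial.aeval_rename]
        have hcompose : ((fun f : E => if f = e then 0 else MvPolynomial.X f) ∘
            (Subtype.val : {x : E // x ∉ ({e} : Finset E)} → E)) =
            fun x : {x : E // x ∉ ({e} : Finset E)} => (MvPolynomial.X (x : E) :
              MvPolynomial E K) := by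
          funext x
          simp [ne_of_mem_subtype x]
        rw [hcompose]
        rw [MvPolynomial.rename_eq_aeval]
        rfl
      have ha2 : MvPolynomial.aeval (fun f : E => if f = e then 0 else MvPolynomial.X f)
          (MvPolynomial.C ((c0 * ac) ^ 2) * MvPolynomial.X e *
            MvPolynomial.rename Subtype.val (psi wc)) = (0 : MvPolynomial E K) := by
        rw [map_mul, map_mul, MvPolynomial.aeval_X]
        simp
      rw [ha1, ha2, add_zero]

end Config
end
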